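/- arXiv:2509.08423 — 3 statements merged into one kernel-verified Lean document; each statement's English description precedes it below -/
import Mathlib

section
/- The rational function (−2z¹⁵ − 23z¹³ − 97z¹¹ − 163z⁹ − 38z⁷ + 81z⁵ + z³ − z)/(2z² − 1) in the variable z is not a Laurent polynomial, i.e., it does not lie in ℤ[z^{±1}]. -/
noncomputable section

/-- The field `ℚ(z)` of rational functions in one variable `z`. -/
abbrev F1 : Type := RatFunc ℚ

def z : F1 := RatFunc.X

/-- The ring of integer Laurent polynomials `ℤ[z^{±1}]` as a subring of `ℚ(z)`. -/
def LaurentZ : Subring F1 := Subring.closure {z, z⁻¹}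

open Polynomial

/-- The subring of `ℚ(z)` of elements of the form `a(z)/z^n` with `a` a polynomial. -/
def Sring : Subring F1 where
  carrier := {f | ∃ (a : ℚ[X]) (n : ℕ), f * z ^ n = algebraMap ℚ[X] F1 a}
  one_mem' := ⟨1, 0, by simp⟩
  zero_mem' := ⟨0, 0, by simp⟩
  mul_mem' := by
    rintro f g ⟨a, m, ha⟩ ⟨b, n, hb⟩
    exact ⟨a * b, m + n, by rw [map_mul, ← ha, ← hb]; ring⟩
  add_mem' := by
    rintro f g ⟨a, m, ha⟩ ⟨b, n, hb⟩
    refine ⟨a * X ^ n + b * X ^ m, m + n, ?_⟩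
    have hX : algebraMap ℚ[X] F1 X = z := RatFunc.algebraMap_X
    rw [map_add, map_mul, map_mul, map_pow, map_pow, hX, ← ha, ← hb]
    ring
  neg_mem' := by
    rintro f ⟨a, m, ha⟩
    exact ⟨-a, m, by rw [map_neg, ← ha]; ring⟩

lemma z_ne_zero : z ≠ 0 := RatFunc.X_ne_zero

lemma laurent_le_S : LaurentZ ≤ Sring := by
  rw [LaurentZ, Subring.closure_le]
  rintro f (rfl | rfl)
  · exact ⟨X, 0, by simp [z, RatFunc.algebraMap_X]⟩
  · exact ⟨1, 1, by simp [inv_mul_cancel₀ z_ne_zero]⟩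

theorem stmt_4 :
    (-2 * z ^ 15 - 23 * z ^ 13 - 97 * z ^ 11 - 163 * z ^ 9 - 38 * z ^ 7 + 81 * z ^ 5
        + z ^ 3 - z) / (2 * z ^ 2 - 1) ∉ LaurentZ := by
  intro hmem
  obtain ⟨a, n, ha⟩ := laurent_le_S hmem
  set Np : ℚ[X] := -2 * X ^ 15 - 23 * X ^ 13 - 97 * X ^ 11 - 163 * X ^ 9 - 38 * X ^ 7
      + 81 * X ^ 5 + X ^ 3 - X with hNp
  set Dp : ℚ[X] := 2 * X ^ 2 - 1 with hDp
  have hX : algebraMap ℚ[X] F1 X = z := RatFunc.algebraMap_X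
  have hN : algebraMap ℚ[X] F1 Np =
      -2 * z ^ 15 - 23 * z ^ 13 - 97 * z ^ 11 - 163 * z ^ 9 - 38 * z ^ 7 + 81 * z ^ 5
        + z ^ 3 - z := by
    simp [hNp, map_sub, map_add, map_mul, map_pow, map_neg, map_ofNat, hX]
  have hD : algebraMap ℚ[X] F1 Dp = 2 * z ^ 2 - 1 := by
    simp [hDp, map_sub, map_mul, map_pow, map_ofNat, hX]
  -- Dp is nonzero
  have hDp0 : Dp ≠ 0 := by
    intro h
    have := congrArg (Polynomial.eval 0) h
    simp [hDp] at this
  have hDne : algebraMap ℚ[X] F1 Dp ≠ 0 := by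
    simpa using (RatFunc.algebraMap_ne_zero hDp0)
  -- cross multiply
  rw [← hN, ← hD] at ha
  have key : algebraMap ℚ[X] F1 (Np * X ^ n) = algebraMap ℚ[X] F1 (a * Dp) := by
    rw [map_mul, map_mul, map_pow, hX]
    field_simp at ha
    linear_combination ha
  have hpoly : Np * X ^ n = a * Dp := RatFunc.algebraMap_injective ℚ key
  -- evaluate at c = √2/2 over ℝ
  set c : ℝ := Real.sqrt 2 / 2 with hc
  have hcpos : 0 < c := by
    have : (0:ℝ) < Real.sqrt 2 := Real.sqrt_pos.mpr (by norm_num)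
    positivity
  have hc2 : c ^ 2 = 1 / 2 := by
    rw [hc, div_pow, Real.sq_sqrt (by norm_num : (0:ℝ) ≤ 2)]
    norm_num
  have heval := congrArg (Polynomial.aeval c) hpoly
  rw [map_mul, map_mul] at heval
  have hNev : Polynomial.aeval c Np = 45 / 32 * c := by
    simp only [hNp, map_sub, map_add, map_mul, map_pow, map_neg, map_ofNat, map_one,
      Polynomial.aeval_X]
    linear_combination (-2*c^13 - 24*c^11 - 109*c^9 - (435/2)*c^7 - (587/4)*c^5
      + (61/8)*c^3 + (77/16)*c) * hc2
  have hDev : Polynomial.aeval c Dp = 0 := by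
    simp only [hDp, map_sub, map_mul, map_pow, map_ofNat, map_one, Polynomial.aeval_X]
    linear_combination 2 * hc2
  rw [hNev, hDev, mul_zero, map_pow, Polynomial.aeval_X] at heval
  have : (45 / 32 * c) * c ^ n ≠ 0 := by positivity
  exact this heval
end
end

section
/- The rational function z²·(2z¹² + 25z¹⁰ + 112z⁸ + 186z⁶ + 17z⁴ − 83z² + 9)/(2z² − 1) in the variable z is not a Laurent polynomial, i.e., it does not lie in ℤ[z^{±1}]. -/
noncomputable section

open Polynomial in
lemma laurent_clear (x : F1) (hx : x ∈ LaurentZ) :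
    ∃ (n : ℕ) (q : ℚ[X]), x * z ^ n = algebraMap ℚ[X] F1 q := by
  have hz : z = algebraMap ℚ[X] F1 X := RatFunc.algebraMap_X.symm
  refine Subring.closure_induction ?_ ?_ ?_ ?_ ?_ ?_ hx
  · rintro y (rfl | rfl)
    · exact ⟨0, X, by simp [hz]⟩
    · exact ⟨1, 1, by
        simp only [pow_one, map_one]
        exact inv_mul_cancel₀ (by rw [hz]; exact_mod_cast
          (map_ne_zero_iff _ (RatFunc.algebraMap_injective ℚ)).mpr Polynomial.X_ne_zero)⟩
  · exact ⟨0, 0, by simp⟩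
  · exact ⟨0, 1, by simp⟩
  · rintro a b _ _ ⟨n, p, hp⟩ ⟨m, q, hq⟩
    refine ⟨n + m, p * X ^ m + q * X ^ n, ?_⟩
    have : (a + b) * z ^ (n + m) = (a * z ^ n) * z ^ m + (b * z ^ m) * z ^ n := by ring
    rw [this, hp, hq, map_add, map_mul, map_mul, map_pow, map_pow, ← hz]
  · rintro a _ ⟨n, p, hp⟩
    exact ⟨n, -p, by rw [map_neg, ← hp]; ring⟩
  · rintro a b _ _ ⟨n, p, hp⟩ ⟨m, q, hq⟩
    refine ⟨n + m, p * q, ?_⟩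
    have : (a * b) * z ^ (n + m) = (a * z ^ n) * (b * z ^ m) := by ring
    rw [this, hp, hq, map_mul]

theorem stmt_5 :
    z ^ 2 * (2 * z ^ 12 + 25 * z ^ 10 + 112 * z ^ 8 + 186 * z ^ 6 + 17 * z ^ 4
        - 83 * z ^ 2 + 9) / (2 * z ^ 2 - 1) ∉ LaurentZ := by
  open Polynomial in
  intro hmem
  obtain ⟨n, q, hq⟩ := laurent_clear _ hmem
  have hz : z = algebraMap ℚ[X] F1 X := RatFunc.algebraMap_X.symm
  set N : ℚ[X] := 2 * X ^ 12 + 25 * X ^ 10 + 112 * X ^ 8 + 186 * X ^ 6 + 17 * X ^ 4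
      - 83 * X ^ 2 + 9 with hN
  set D : ℚ[X] := 2 * X ^ 2 - 1 with hD
  have hDne : D ≠ 0 := by
    intro h
    have := congrArg (Polynomial.eval 0) h
    simp [hD] at this
  have hDne' : algebraMap ℚ[X] F1 D ≠ 0 :=
    (map_ne_zero_iff _ (RatFunc.algebraMap_injective ℚ)).mpr hDne
  have hnum : z ^ 2 * (2 * z ^ 12 + 25 * z ^ 10 + 112 * z ^ 8 + 186 * z ^ 6 + 17 * z ^ 4
      - 83 * z ^ 2 + 9) = algebraMap ℚ[X] F1 (X ^ 2 * N) := by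
    simp only [hz, hN, map_mul, map_add, map_sub, map_pow, map_ofNat, map_one]
  have hden : 2 * z ^ 2 - 1 = algebraMap ℚ[X] F1 D := by
    simp only [hz, hD, map_mul, map_sub, map_pow, map_ofNat, map_one]
  rw [hnum, hden, div_mul_eq_mul_div, div_eq_iff hDne', hz, ← map_pow, ← map_mul,
    ← map_mul] at hq
  have hpoly : X ^ 2 * N * X ^ n = q * D := RatFunc.algebraMap_injective ℚ hq
  -- evaluate at √2 / 2
  set c : ℝ := Real.sqrt 2 / 2 with hc
  have hc2 : c ^ 2 = 1 / 2 := by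
    rw [hc, div_pow, Real.sq_sqrt (by norm_num : (2:ℝ) ≥ 0)]
    norm_num
  have hcne : c ≠ 0 := by
    have : (0:ℝ) < Real.sqrt 2 := Real.sqrt_pos.mpr (by norm_num)
    positivity
  have hev := congrArg (Polynomial.aeval c) hpoly
  simp only [hN, hD, map_mul, map_add, map_sub, map_pow, map_ofNat, map_one, aeval_X] at hev
  have h12 : c ^ 12 = 1 / 64 := by
    rw [show c ^ 12 = (c ^ 2) ^ 6 by ring, hc2]; norm_num
  have h10 : c ^ 10 = 1 / 32 := by
    rw [show c ^ 10 = (c ^ 2) ^ 5 by ring, hc2]; norm_num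
  have h8 : c ^ 8 = 1 / 16 := by
    rw [show c ^ 8 = (c ^ 2) ^ 4 by ring, hc2]; norm_num
  have h6 : c ^ 6 = 1 / 8 := by
    rw [show c ^ 6 = (c ^ 2) ^ 3 by ring, hc2]; norm_num
  have h4 : c ^ 4 = 1 / 4 := by
    rw [show c ^ 4 = (c ^ 2) ^ 2 by ring, hc2]; norm_num
  rw [hc2, h12, h10, h8, h6, h4] at hev
  norm_num at hev
  exact hcne hev.1

end
end

section
/- The two pairs of Laurent polynomials (A₁, B₁) and (A₂, B₂), where A₁ = −2z¹⁵ − 11z¹³ + 51z¹¹ + 527z⁹ + 1512z⁷ + 1924z⁵ + 1041z³ + 103z − 56/z, B₁ = −2z¹⁶ − 15z¹⁴ + 33z¹² + 685z¹⁰ + 2874z⁸ + 5794z⁶ + 6123z⁴ + 3163z² + 600, A₂ = −2z¹⁵ − 3z¹³ + 155z¹¹ + 1055z⁹ + 2840z⁷ + 3652z⁵ + 2129z³ + 359z − 56/z, B₂ = −2z¹⁶ − 11z¹⁴ + 85z¹² + 949z¹⁰ + 3538z⁸ + 6658z⁶ + 6667z⁴ + 3291z² + 600, satisfy A₁ ≠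 A₂ and B₁ ≠ B₂ as elements of ℤ[z^{±1}]. -/
noncomputable section

open Polynomial in
theorem stmt_9 :
    (-2 * z ^ 15 - 11 * z ^ 13 + 51 * z ^ 11 + 527 * z ^ 9 + 1512 * z ^ 7 + 1924 * z ^ 5
        + 1041 * z ^ 3 + 103 * z - 56 / z
      ≠ -2 * z ^ 15 - 3 * z ^ 13 + 155 * z ^ 11 + 1055 * z ^ 9 + 2840 * z ^ 7 + 3652 * z ^ 5
        + 2129 * z ^ 3 + 359 * z - 56 / z) ∧
    (-2 * z ^ 16 - 15 * z ^ 14 + 33 * z ^ 12 + 685 * z ^ 10 + 2874 * z ^ 8 + 5794 * z ^ 6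
        + 6123 * z ^ 4 + 3163 * z ^ 2 + 600
      ≠ -2 * z ^ 16 - 11 * z ^ 14 + 85 * z ^ 12 + 949 * z ^ 10 + 3538 * z ^ 8 + 6658 * z ^ 6
        + 6667 * z ^ 4 + 3291 * z ^ 2 + 600) := by
  have inj : Function.Injective (algebraMap ℚ[X] F1) := RatFunc.algebraMap_injective ℚ
  constructor
  · intro h
    have h1 : (8 : F1) * z ^ 13 + 104 * z ^ 11 + 528 * z ^ 9 + 1328 * z ^ 7 + 1728 * z ^ 5
        + 1088 * z ^ 3 + 256 * z = 0 := by linear_combination -h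
    have h2 : algebraMap ℚ[X] F1
        (8 * X ^ 13 + 104 * X ^ 11 + 528 * X ^ 9 + 1328 * X ^ 7 + 1728 * X ^ 5
          + 1088 * X ^ 3 + 256 * X) = algebraMap ℚ[X] F1 0 := by
      simpa [z, RatFunc.algebraMap_X, map_add, map_mul, map_pow, map_ofNat] using h1
    have h3 := inj h2
    have := congrArg (fun p => Polynomial.coeff p 1) h3
    simp [coeff_X_pow, coeff_one] at this
  · intro h
    have h1 : (4 : F1) * z ^ 14 + 52 * z ^ 12 + 264 * z ^ 10 + 664 * z ^ 8 + 864 * z ^ 6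
        + 544 * z ^ 4 + 128 * z ^ 2 = 0 := by linear_combination -h
    have h2 : algebraMap ℚ[X] F1
        (4 * X ^ 14 + 52 * X ^ 12 + 264 * X ^ 10 + 664 * X ^ 8 + 864 * X ^ 6
          + 544 * X ^ 4 + 128 * X ^ 2) = algebraMap ℚ[X] F1 0 := by
      simpa [z, RatFunc.algebraMap_X, map_add, map_mul, map_pow, map_ofNat] using h1
    have h3 := inj h2
    have := congrArg (fun p => Polynomial.coeff p 2) h3
    simp [coeff_X_pow, coeff_one] at this

end
end
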